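/- Let d ≥ 3 be odd, let k ≥ 4, let n = (d−1)/2, and let G be a nonempty connected simple graph. Let G' be the disjoint union of G and Q_n together with an edge between the vertex c_0 of Q_n and every vertex of G. Then G' has diameter exactly d, and G admits a proper vertex (k−1)-coloring if and only if G' admits a strong conflict-free vertex-connection k-coloring. -/

import Mathlib

open SimpleGraph

/-- `f` is a strong conflict-free vertex-connection coloring of `G`: any two distinct
vertices are joined by a shortest path on which some color occurs exactly once. -/
def IsSCFVC {V α : Type*} [DecidableEq α] (G : SimpleGraph V) (f : V → α) : Prop :=
  ∀ u v : V, u ≠ v → ∃ p : G.Walk u v, p.length = G.dist u v ∧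
    ∃ c : α, (p.support.map f).count c = 1

/-- Vertices of the graph `Q n`: `A i`, `B i` are `a_{i+1}`, `b_{i+1}` for `i : Fin n`,
and `C j` is `c_j` for `j : Fin (n+1)`. -/
inductive QV (n : ℕ) where
  | A : Fin n → QV n
  | B : Fin n → QV n
  | C : Fin (n + 1) → QV n
deriving DecidableEq

/-- The disjoint union of `G` and `Q n` together with an edge between the vertex `c_0`
of `Q n` and every vertex of `G`. -/
def joinQ {V : Type*} (G : SimpleGraph V) (n : ℕ) : SimpleGraph (V ⊕ QV n) :=
  SimpleGraph.fromRel (fun x y =>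
    match x, y with
    | .inl u, .inl v => G.Adj u v
    | .inr (.A i), .inr (.B j) => i.val = j.val
    | .inr (.A i), .inr (.C j) => j.val = i.val ∨ j.val = i.val + 1
    | .inr (.B i), .inr (.C j) => j.val = i.val ∨ j.val = i.val + 1
    | .inl _, .inr (.C j) => j.val = 0
    | _, _ => False)

namespace Aux
variable {V : Type*} {G : SimpleGraph V} {n : ℕ}

abbrev vC (V : Type*) (n : ℕ) (j : ℕ) (h : j ≤ n) : V ⊕ QV n := Sum.inr (QV.C ⟨j, by omega⟩)
abbrev vA (V : Type*) (n : ℕ) (i : ℕ) (h : i < n) : V ⊕ QV n := Sum.inr (QV.A ⟨i, h⟩)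
abbrev vB (V : Type*) (n : ℕ) (i : ℕ) (h : i < n) : V ⊕ QV n := Sum.inr (QV.B ⟨i, h⟩)

lemma adj_CA {j i : ℕ} (hj : j ≤ n) (hi : i < n) (hc : j = i ∨ j = i + 1) :
    (joinQ G n).Adj (vC V n j hj) (vA V n i hi) := by
  rw [joinQ, fromRel_adj]; refine ⟨by simp, Or.inr ?_⟩; simpa using hc

lemma adj_CB {j i : ℕ} (hj : j ≤ n) (hi : i < n) (hc : j = i ∨ j = i + 1) :
    (joinQ G n).Adj (vC V n j hj) (vB V n i hi) := by
  rw [joinQ, fromRel_adj]; refine ⟨by simp, Or.inr ?_⟩; simpa using hc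

lemma adj_AB {i : ℕ} (hi : i < n) : (joinQ G n).Adj (vA V n i hi) (vB V n i hi) := by
  rw [joinQ, fromRel_adj]; exact ⟨by simp, Or.inl rfl⟩

lemma adj_inl_C0 (u : V) (h0 : (0:ℕ) ≤ n) : (joinQ G n).Adj (Sum.inl u) (vC V n 0 h0) := by
  rw [joinQ, fromRel_adj]; exact ⟨by simp, Or.inl rfl⟩

lemma adj_inl_inl {u v : V} (h : G.Adj u v) : (joinQ G n).Adj (Sum.inl u) (Sum.inl v) := by
  rw [joinQ, fromRel_adj]; exact ⟨by simpa using h.ne, Or.inl h⟩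

/-- one "diamond" step from `c_i` to `c_{i+1}` through `a` (if `s i = false`) or `b`. -/
def stepW (G : SimpleGraph V) (n : ℕ) (s : ℕ → Bool) (i : ℕ) (h : i < n) :
    (joinQ G n).Walk (vC V n i (by omega)) (vC V n (i+1) (by omega)) :=
  if s i then
    Walk.cons (adj_CB (by omega) h (Or.inl rfl))
      (Walk.cons ((adj_CB (by omega) h (Or.inr rfl)).symm) Walk.nil)
  else
    Walk.cons (adj_CA (by omega) h (Or.inl rfl))
      (Walk.cons ((adj_CA (by omega) h (Or.inr rfl)).symm) Walk.nil)

@[simp] lemma stepW_length (s : ℕ → Bool) (i : ℕ) (h : i < n) :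
    (stepW G n s i h).length = 2 := by
  rw [stepW]; split <;> rfl

lemma stepW_support (s : ℕ → Bool) (i : ℕ) (h : i < n) :
    (stepW G n s i h).support =
      [vC V n i (by omega), (if s i then vB V n i h else vA V n i h), vC V n (i+1) (by omega)] := by
  rw [stepW]; split <;> simp_all

/-- walk from `c_j` up to `c_{j+m}` -/
def upW (G : SimpleGraph V) (n : ℕ) (s : ℕ → Bool) :
    (m : ℕ) → (j : ℕ) → (h : j + m ≤ n) → (joinQ G n).Walk (vC V n j (by omega)) (vC V n (j+m) h)
  | 0, j, _ => Walk.nil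
  | (m+1), j, h =>
    (upW G n s m j (by omega)).append (stepW G n s (j+m) (by omega))

@[simp] lemma upW_length (s : ℕ → Bool) (m j : ℕ) (h : j + m ≤ n) :
    (upW G n s m j h).length = 2 * m := by
  induction m with
  | zero => rfl
  | succ m ih => rw [upW]; simp [ih]; omega


lemma upW_count {α : Type*} [DecidableEq α] (f : V ⊕ QV n → α) (a0 b1 c2 : α)
    (hA : ∀ i hi, f (vA V n i hi) = a0) (hB : ∀ i hi, f (vB V n i hi) = b1)
    (hC : ∀ j hj, 1 ≤ j → f (vC V n j hj) = c2)
    (hac : a0 ≠ c2) (hbc : b1 ≠ c2)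
    (s : ℕ → Bool) (m j : ℕ) (hj : 1 ≤ j) (h : j + m ≤ n) (x : α) :
    ((upW G n s m j h).support.map f).count x
      = (if x = c2 then m + 1 else 0)
        + (((List.range m).map (fun t => if s (j+t) then b1 else a0)).count x) := by
  induction m with
  | zero =>
    have h1 := hC j (by omega) hj
    simp only [upW, Walk.support_nil, List.map_cons, List.map_nil, h1, List.count_cons,
      List.count_nil, List.range_zero, Nat.zero_add, List.map_nil]
    rcases eq_or_ne x c2 with rfl | hx
    · simp
    · simp [hx, Ne.symm hx]
  | succ m ih =>
    rw [upW, Walk.support_append, List.map_append, List.count_append, ih (by omega),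
      stepW_support, List.range_succ]
    simp only [List.tail_cons, List.map_cons, List.map_nil, List.map_append,
      List.count_append]
    have h1 : f (vC V n (j+m+1) (by omega)) = c2 := hC _ _ (by omega)
    have h2 : f (if s (j+m) then vB V n (j+m) (by omega) else vA V n (j+m) (by omega))
        = (if s (j+m) then b1 else a0) := by split <;> simp [hA, hB]
    rw [h2, h1]
    rcases eq_or_ne x c2 with rfl | hx
    · have hxa : (if s (j+m) then b1 else a0) ≠ x := by split <;> assumption
      simp [List.count_cons, List.count_append, hxa]
      omega
    · simp [List.count_cons, List.count_append, hx, Ne.symm hx]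

lemma upW_count_st {α : Type*} [DecidableEq α] (f : V ⊕ QV n → α) (st : α)
    (hA : ∀ i hi, f (vA V n i hi) ≠ st) (hB : ∀ i hi, f (vB V n i hi) ≠ st)
    (hC : ∀ j hj, 1 ≤ j → f (vC V n j hj) ≠ st) (hC0 : ∀ h0, f (vC V n 0 h0) = st)
    (s : ℕ → Bool) (m j : ℕ) (h : j + m ≤ n) :
    ((upW G n s m j h).support.map f).count st = if j = 0 then 1 else 0 := by
  induction m with
  | zero =>
    simp [upW, Walk.support_nil]
    rcases Nat.eq_zero_or_pos j with hj | hj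
    · subst hj; simp [hC0]
    · have h1 := hC j (by omega) hj
      simp [List.count_cons, h1, Nat.pos_iff_ne_zero.mp hj]
  | succ m ih =>
    rw [upW, Walk.support_append, List.map_append, List.count_append, ih (by omega),
      stepW_support]
    have h1 : f (vC V n (j+m+1) (by omega)) ≠ st := hC _ _ (by omega)
    have h2 : f (if s (j+m) then vB V n (j+m) (by omega) else vA V n (j+m) (by omega)) ≠ st := by
      split
      · exact hB _ _
      · exact hA _ _
    simp [List.count_cons, h1, h2]

def phi : V ⊕ QV n → ℕ
  | .inl _ => 0
  | .inr (.C j) => 2 * j.val + 1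
  | .inr (.A i) => 2 * i.val + 2
  | .inr (.B i) => 2 * i.val + 2

lemma phi_adj {x y : V ⊕ QV n} (h : (joinQ G n).Adj x y) : phi y ≤ phi x + 1 := by
  rw [joinQ, fromRel_adj] at h
  obtain ⟨-, h | h⟩ := h <;>
  · rcases x with u | (i | i | j) <;> rcases y with v | (i' | i' | j') <;>
      simp_all [phi] <;> omega

lemma count_one_pattern {α : Type*} [DecidableEq α] (c d : α) (hdc : d ≠ c)
    (m j t0 : ℕ) (h1 : j ≤ t0) (h2 : t0 < j + m) :
    (((List.range m).map (fun t => if j + t = t0 then c else d)).count c) = 1 := by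
  induction m with
  | zero => omega
  | succ m ih =>
    rw [List.range_succ, List.map_append, List.count_append]
    by_cases ht : t0 = j + m
    · have hz : ((List.range m).map (fun t => if j + t = t0 then c else d)).count c = 0 := by
        rw [List.count_eq_zero]
        intro hmem
        rw [List.mem_map] at hmem
        obtain ⟨t, htr, hte⟩ := hmem
        rw [List.mem_range] at htr
        by_cases hjt : j + t = t0
        · omega
        · rw [if_neg hjt] at hte; exact hdc hte
      rw [hz]
      have e : j + m = t0 := ht.symm
      simp [e]
    · rw [ih (by omega)]
      have hne : ¬ (j + m = t0) := by omega
      simp [hne, List.count_cons, hdc]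

lemma phi_walk {x y : V ⊕ QV n} (p : (joinQ G n).Walk x y) : phi y ≤ phi x + p.length := by
  induction p with
  | nil => simp
  | cons h p ih =>
    have := phi_adj h
    rw [Walk.length_cons]
    omega

lemma phi_walk' {x y : V ⊕ QV n} (p : (joinQ G n).Walk x y) : phi x ≤ phi y + p.length := by
  have := phi_walk p.reverse
  rwa [Walk.length_reverse] at this

lemma dist_edist_of_walk {x y : V ⊕ QV n} (L : ℕ) (p : (joinQ G n).Walk x y)
    (hp : p.length = L) (hlb : ∀ q : (joinQ G n).Walk x y, L ≤ q.length) :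
    (joinQ G n).dist x y = L ∧ (joinQ G n).edist x y = L := by
  have hr : (joinQ G n).Reachable x y := p.reachable
  constructor
  · refine le_antisymm (hp ▸ SimpleGraph.dist_le p) ?_
    obtain ⟨q, hq⟩ := hr.exists_walk_length_eq_dist
    exact hq ▸ hlb q
  · refine le_antisymm ?_ ?_
    · rw [← hp]; exact_mod_cast SimpleGraph.edist_le p
    · obtain ⟨q, hq⟩ := hr.exists_walk_length_eq_edist
      rw [← hq]; exact_mod_cast hlb q

lemma one_le_len {x y : V ⊕ QV n} (hne : x ≠ y) (q : (joinQ G n).Walk x y) : 1 ≤ q.length := by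
  cases q with
  | nil => exact absurd rfl hne
  | cons h p => simp [Walk.length_cons]

lemma two_le_len {x y : V ⊕ QV n} (hne : x ≠ y) (hnadj : ¬ (joinQ G n).Adj x y)
    (q : (joinQ G n).Walk x y) : 2 ≤ q.length := by
  cases q with
  | nil => exact absurd rfl hne
  | cons h p =>
    cases p with
    | nil => exact absurd h hnadj
    | cons h' p' => simp [Walk.length_cons]

@[simp] lemma phi_inl (u : V) : phi (Sum.inl u : V ⊕ QV n) = 0 := rfl
@[simp] lemma phi_vC (j : ℕ) (h : j ≤ n) : phi (vC V n j h) = 2 * j + 1 := rfl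
@[simp] lemma phi_vA (i : ℕ) (h : i < n) : phi (vA V n i h) = 2 * i + 2 := rfl
@[simp] lemma phi_vB (i : ℕ) (h : i < n) : phi (vB V n i h) = 2 * i + 2 := rfl

lemma vC_eq {j j' : ℕ} (hj : j ≤ n) (hj' : j' ≤ n) (e : j = j') :
    vC V n j hj = vC V n j' hj' := by subst e; rfl

lemma vert_cases (x : V ⊕ QV n) : (∃ u, x = Sum.inl u) ∨ (∃ j hj, x = vC V n j hj) ∨
    (∃ i hi, x = vA V n i hi) ∨ (∃ i hi, x = vB V n i hi) := by
  rcases x with u | q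
  · exact Or.inl ⟨u, rfl⟩
  · rcases q with ⟨i, hi⟩ | ⟨i, hi⟩ | ⟨j, hj⟩
    · exact Or.inr (Or.inr (Or.inl ⟨i, hi, rfl⟩))
    · exact Or.inr (Or.inr (Or.inr ⟨i, hi, rfl⟩))
    · exact Or.inr (Or.inl ⟨j, by omega, rfl⟩)

lemma adj_inl_inv {u v : V} (h : (joinQ G n).Adj (Sum.inl u) (Sum.inl v)) : G.Adj u v := by
  rw [joinQ, fromRel_adj] at h
  obtain ⟨-, h | h⟩ := h
  · exact h
  · exact h.symm

/-- corrected-endpoint up walk -/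
def upW' (G : SimpleGraph V) (n : ℕ) (s : ℕ → Bool) (j j' : ℕ) (hjj : j ≤ j') (h : j' ≤ n) :
    (joinQ G n).Walk (vC V n j (by omega)) (vC V n j' h) :=
  (upW G n s (j' - j) j (by omega)).copy rfl (vC_eq _ _ (by omega))

@[simp] lemma upW'_length (s : ℕ → Bool) (j j' : ℕ) (hjj : j ≤ j') (h : j' ≤ n) :
    (upW' G n s j j' hjj h).length = 2 * (j' - j) := by
  rw [upW', Walk.length_copy, upW_length]

lemma upW'_support (s : ℕ → Bool) (j j' : ℕ) (hjj : j ≤ j') (h : j' ≤ n) :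
    (upW' G n s j j' hjj h).support = (upW G n s (j' - j) j (by omega)).support := by
  rw [upW', Walk.support_copy]

def wCC (s : ℕ → Bool) (j j' : ℕ) (hjj : j ≤ j') (h : j' ≤ n) :
    (joinQ G n).Walk (vC V n j (by omega)) (vC V n j' h) := upW' G n s j j' hjj h

def wCA (s : ℕ → Bool) (j i : ℕ) (hj : j ≤ i) (hi : i < n) :
    (joinQ G n).Walk (vC V n j (by omega)) (vA V n i hi) :=
  (upW' G n s j i hj (by omega)).append (Walk.cons (adj_CA (by omega) hi (Or.inl rfl)) Walk.nil)

def wCB (s : ℕ → Bool) (j i : ℕ) (hj : j ≤ i) (hi : i < n) :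
    (joinQ G n).Walk (vC V n j (by omega)) (vB V n i hi) :=
  (upW' G n s j i hj (by omega)).append (Walk.cons (adj_CB (by omega) hi (Or.inl rfl)) Walk.nil)

def wAC (s : ℕ → Bool) (i j : ℕ) (hi : i < n) (hij : i + 1 ≤ j) (hj : j ≤ n) :
    (joinQ G n).Walk (vA V n i hi) (vC V n j hj) :=
  Walk.cons ((adj_CA (by omega) hi (Or.inr rfl)).symm) (upW' G n s (i+1) j hij hj)

def wBC (s : ℕ → Bool) (i j : ℕ) (hi : i < n) (hij : i + 1 ≤ j) (hj : j ≤ n) :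
    (joinQ G n).Walk (vB V n i hi) (vC V n j hj) :=
  Walk.cons ((adj_CB (by omega) hi (Or.inr rfl)).symm) (upW' G n s (i+1) j hij hj)

def wAA (s : ℕ → Bool) (i i' : ℕ) (hi : i < n) (hii : i < i') (hi' : i' < n) :
    (joinQ G n).Walk (vA V n i hi) (vA V n i' hi') :=
  Walk.cons ((adj_CA (by omega) hi (Or.inr rfl)).symm) (wCA (G := G) s (i+1) i' hii hi')

def wAB (s : ℕ → Bool) (i i' : ℕ) (hi : i < n) (hii : i < i') (hi' : i' < n) :
    (joinQ G n).Walk (vA V n i hi) (vB V n i' hi') :=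
  Walk.cons ((adj_CA (by omega) hi (Or.inr rfl)).symm) (wCB (G := G) s (i+1) i' hii hi')

def wBA (s : ℕ → Bool) (i i' : ℕ) (hi : i < n) (hii : i < i') (hi' : i' < n) :
    (joinQ G n).Walk (vB V n i hi) (vA V n i' hi') :=
  Walk.cons ((adj_CB (by omega) hi (Or.inr rfl)).symm) (wCA (G := G) s (i+1) i' hii hi')

def wBB (s : ℕ → Bool) (i i' : ℕ) (hi : i < n) (hii : i < i') (hi' : i' < n) :
    (joinQ G n).Walk (vB V n i hi) (vB V n i' hi') :=
  Walk.cons ((adj_CB (by omega) hi (Or.inr rfl)).symm) (wCB (G := G) s (i+1) i' hii hi')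

def wUC (s : ℕ → Bool) (u : V) (j : ℕ) (hj : j ≤ n) :
    (joinQ G n).Walk (Sum.inl u) (vC V n j hj) :=
  Walk.cons (adj_inl_C0 u (by omega)) (upW' G n s 0 j (by omega) hj)

def wUA (s : ℕ → Bool) (u : V) (i : ℕ) (hi : i < n) :
    (joinQ G n).Walk (Sum.inl u) (vA V n i hi) :=
  Walk.cons (adj_inl_C0 u (by omega)) (wCA (G := G) s 0 i (by omega) hi)

def wUB (s : ℕ → Bool) (u : V) (i : ℕ) (hi : i < n) :
    (joinQ G n).Walk (Sum.inl u) (vB V n i hi) :=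
  Walk.cons (adj_inl_C0 u (by omega)) (wCB (G := G) s 0 i (by omega) hi)

def wUV (u v : V) : (joinQ G n).Walk (Sum.inl u) (Sum.inl v) :=
  Walk.cons (adj_inl_C0 u (by omega)) (Walk.cons (adj_inl_C0 v (by omega)).symm Walk.nil)

@[simp] lemma wCA_length (s j i) (hj : j ≤ i) (hi : i < n) :
    (wCA (G := G) s j i hj hi).length = 2 * (i - j) + 1 := by
  simp [wCA, Walk.length_append]

@[simp] lemma wCB_length (s j i) (hj : j ≤ i) (hi : i < n) :
    (wCB (G := G) s j i hj hi).length = 2 * (i - j) + 1 := by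
  simp [wCB, Walk.length_append]

@[simp] lemma wAC_length (s i j) (hi : i < n) (hij : i + 1 ≤ j) (hj : j ≤ n) :
    (wAC (G := G) s i j hi hij hj).length = 2 * (j - i) - 1 := by
  simp [wAC]; omega

@[simp] lemma wBC_length (s i j) (hi : i < n) (hij : i + 1 ≤ j) (hj : j ≤ n) :
    (wBC (G := G) s i j hi hij hj).length = 2 * (j - i) - 1 := by
  simp [wBC]; omega

@[simp] lemma wAA_length (s i i') (hi : i < n) (hii : i < i') (hi' : i' < n) :
    (wAA (G := G) s i i' hi hii hi').length = 2 * (i' - i) := by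
  simp [wAA]; omega

@[simp] lemma wAB_length (s i i') (hi : i < n) (hii : i < i') (hi' : i' < n) :
    (wAB (G := G) s i i' hi hii hi').length = 2 * (i' - i) := by
  simp [wAB]; omega

@[simp] lemma wBA_length (s i i') (hi : i < n) (hii : i < i') (hi' : i' < n) :
    (wBA (G := G) s i i' hi hii hi').length = 2 * (i' - i) := by
  simp [wBA]; omega

@[simp] lemma wBB_length (s i i') (hi : i < n) (hii : i < i') (hi' : i' < n) :
    (wBB (G := G) s i i' hi hii hi').length = 2 * (i' - i) := by
  simp [wBB]; omega

@[simp] lemma wUC_length (s u j) (hj : j ≤ n) :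
    (wUC (G := G) s u j hj).length = 2 * j + 1 := by
  simp [wUC]

@[simp] lemma wUA_length (s u i) (hi : i < n) :
    (wUA (G := G) s u i hi).length = 2 * i + 2 := by
  simp [wUA]

@[simp] lemma wUB_length (s u i) (hi : i < n) :
    (wUB (G := G) s u i hi).length = 2 * i + 2 := by
  simp [wUB]

@[simp] lemma wUV_length (u v : V) : (wUV (G := G) (n:=n) u v).length = 2 := rfl

@[simp] lemma wCC_length (s : ℕ → Bool) (j j' : ℕ) (hjj : j ≤ j') (h : j' ≤ n) :
    (wCC (G := G) s j j' hjj h).length = 2 * (j' - j) := by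
  simp [wCC]

lemma exists_walk_le (hn : 1 ≤ n) (x y : V ⊕ QV n) :
    ∃ p : (joinQ G n).Walk x y, p.length ≤ 2 * n + 1 := by
  rcases vert_cases x with ⟨u, rfl⟩ | ⟨j, hj, rfl⟩ | ⟨i, hi, rfl⟩ | ⟨i, hi, rfl⟩ <;>
    rcases vert_cases y with ⟨v, rfl⟩ | ⟨j', hj', rfl⟩ | ⟨i', hi', rfl⟩ | ⟨i', hi', rfl⟩
  · exact ⟨wUV (G := G) u v, by simp; omega⟩
  · exact ⟨wUC (G := G) (fun _ => false) u j' hj', by simp; omega⟩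
  · exact ⟨wUA (G := G) (fun _ => false) u i' hi', by simp; omega⟩
  · exact ⟨wUB (G := G) (fun _ => false) u i' hi', by simp; omega⟩
  · exact ⟨(wUC (G := G) (fun _ => false) v j hj).reverse, by simp; omega⟩
  · rcases le_total j j' with h | h
    · exact ⟨wCC (G := G) (fun _ => false) j j' h hj', by simp; omega⟩
    · exact ⟨(wCC (G := G) (fun _ => false) j' j h hj).reverse, by simp; omega⟩
  · rcases le_or_gt j i' with h | h
    · exact ⟨wCA (G := G) (fun _ => false) j i' h hi', by simp; omega⟩
    · exact ⟨(wAC (G := G) (fun _ => false) i' j hi' h hj).reverse, by simp; omega⟩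
  · rcases le_or_gt j i' with h | h
    · exact ⟨wCB (G := G) (fun _ => false) j i' h hi', by simp; omega⟩
    · exact ⟨(wBC (G := G) (fun _ => false) i' j hi' h hj).reverse, by simp; omega⟩
  · exact ⟨(wUA (G := G) (fun _ => false) v i hi).reverse, by simp; omega⟩
  · rcases le_or_gt (i+1) j' with h | h
    · exact ⟨wAC (G := G) (fun _ => false) i j' hi h hj', by simp; omega⟩
    · exact ⟨(wCA (G := G) (fun _ => false) j' i (by omega) hi).reverse, by simp; omega⟩
  · rcases lt_trichotomy i i' with h | rfl | h
    · exact ⟨wAA (G := G) (fun _ => false) i i' hi h hi', by simp; omega⟩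
    · exact ⟨Walk.nil, by simp⟩
    · exact ⟨(wAA (G := G) (fun _ => false) i' i hi' h hi).reverse, by simp; omega⟩
  · rcases lt_trichotomy i i' with h | rfl | h
    · exact ⟨wAB (G := G) (fun _ => false) i i' hi h hi', by simp; omega⟩
    · exact ⟨Walk.cons (adj_AB hi) Walk.nil, by simp⟩
    · exact ⟨(wBA (G := G) (fun _ => false) i' i hi' h hi).reverse, by simp; omega⟩
  · exact ⟨(wUB (G := G) (fun _ => false) v i hi).reverse, by simp; omega⟩
  · rcases le_or_gt (i+1) j' with h | h
    · exact ⟨wBC (G := G) (fun _ => false) i j' hi h hj', by simp; omega⟩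
    · exact ⟨(wCB (G := G) (fun _ => false) j' i (by omega) hi).reverse, by simp; omega⟩
  · rcases lt_trichotomy i i' with h | rfl | h
    · exact ⟨wBA (G := G) (fun _ => false) i i' hi h hi', by simp; omega⟩
    · exact ⟨Walk.cons (adj_AB hi).symm Walk.nil, by simp⟩
    · exact ⟨(wAB (G := G) (fun _ => false) i' i hi' h hi).reverse, by simp; omega⟩
  · rcases lt_trichotomy i i' with h | rfl | h
    · exact ⟨wBB (G := G) (fun _ => false) i i' hi h hi', by simp; omega⟩
    · exact ⟨Walk.nil, by simp⟩
    · exact ⟨(wBB (G := G) (fun _ => false) i' i hi' h hi).reverse, by simp; omega⟩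

lemma edist_inl_Cn (u : V) :
    (joinQ G n).edist (Sum.inl u) (vC V n n le_rfl) = (2 * n + 1 : ℕ) :=
  (dist_edist_of_walk (2 * n + 1) (wUC (G := G) (fun _ => false) u n le_rfl) (by simp)
    (fun q => by
      have h1 := phi_walk q
      simp only [phi_inl, phi_vC] at h1
      omega)).2

lemma diam_joinQ [Nonempty V] (hn : 1 ≤ n) : (joinQ G n).diam = 2 * n + 1 := by
  have hediam : (joinQ G n).ediam = (2 * n + 1 : ℕ) := by
    apply le_antisymm
    · apply ediam_le_of_edist_le
      intro x y
      obtain ⟨p, hp⟩ := exists_walk_le hn x y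
      calc (joinQ G n).edist x y ≤ p.length := SimpleGraph.edist_le p
        _ ≤ ((2 * n + 1 : ℕ) : ℕ∞) := by exact_mod_cast hp
    · rw [← edist_inl_Cn (G := G) (Classical.arbitrary V)]
      exact edist_le_ediam
  rw [SimpleGraph.diam, hediam, ENat.toNat_coe]

/-! ### support lemmas -/

lemma wCA_support (s : ℕ → Bool) (j i : ℕ) (hj : j ≤ i) (hi : i < n) :
    (wCA (G := G) s j i hj hi).support
      = (upW' G n s j i hj (by omega)).support ++ [vA V n i hi] := by
  rw [wCA, Walk.support_append]; simp

lemma wCB_support (s : ℕ → Bool) (j i : ℕ) (hj : j ≤ i) (hi : i < n) :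
    (wCB (G := G) s j i hj hi).support
      = (upW' G n s j i hj (by omega)).support ++ [vB V n i hi] := by
  rw [wCB, Walk.support_append]; simp

lemma wAC_support (s : ℕ → Bool) (i j : ℕ) (hi : i < n) (hij : i + 1 ≤ j) (hj : j ≤ n) :
    (wAC (G := G) s i j hi hij hj).support
      = vA V n i hi :: (upW' G n s (i+1) j hij hj).support := by
  rw [wAC, Walk.support_cons]

lemma wBC_support (s : ℕ → Bool) (i j : ℕ) (hi : i < n) (hij : i + 1 ≤ j) (hj : j ≤ n) :
    (wBC (G := G) s i j hi hij hj).support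
      = vB V n i hi :: (upW' G n s (i+1) j hij hj).support := by
  rw [wBC, Walk.support_cons]

lemma wAA_support (s : ℕ → Bool) (i i' : ℕ) (hi : i < n) (hii : i < i') (hi' : i' < n) :
    (wAA (G := G) s i i' hi hii hi').support
      = vA V n i hi :: ((upW' G n s (i+1) i' hii (by omega)).support ++ [vA V n i' hi']) := by
  rw [wAA, Walk.support_cons, wCA_support]

lemma wAB_support (s : ℕ → Bool) (i i' : ℕ) (hi : i < n) (hii : i < i') (hi' : i' < n) :
    (wAB (G := G) s i i' hi hii hi').support
      = vA V n i hi :: ((upW' G n s (i+1) i' hii (by omega)).support ++ [vB V n i' hi']) := by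
  rw [wAB, Walk.support_cons, wCB_support]

lemma wBA_support (s : ℕ → Bool) (i i' : ℕ) (hi : i < n) (hii : i < i') (hi' : i' < n) :
    (wBA (G := G) s i i' hi hii hi').support
      = vB V n i hi :: ((upW' G n s (i+1) i' hii (by omega)).support ++ [vA V n i' hi']) := by
  rw [wBA, Walk.support_cons, wCA_support]

lemma wBB_support (s : ℕ → Bool) (i i' : ℕ) (hi : i < n) (hii : i < i') (hi' : i' < n) :
    (wBB (G := G) s i i' hi hii hi').support
      = vB V n i hi :: ((upW' G n s (i+1) i' hii (by omega)).support ++ [vB V n i' hi']) := by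
  rw [wBB, Walk.support_cons, wCB_support]

lemma wUC_support (s : ℕ → Bool) (u : V) (j : ℕ) (hj : j ≤ n) :
    (wUC (G := G) s u j hj).support
      = Sum.inl u :: (upW' G n s 0 j (by omega) hj).support := by
  rw [wUC, Walk.support_cons]

lemma wUA_support (s : ℕ → Bool) (u : V) (i : ℕ) (hi : i < n) :
    (wUA (G := G) s u i hi).support
      = Sum.inl u :: ((upW' G n s 0 i (by omega) (by omega)).support ++ [vA V n i hi]) := by
  rw [wUA, Walk.support_cons, wCA_support]

lemma wUB_support (s : ℕ → Bool) (u : V) (i : ℕ) (hi : i < n) :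
    (wUB (G := G) s u i hi).support
      = Sum.inl u :: ((upW' G n s 0 i (by omega) (by omega)).support ++ [vB V n i hi]) := by
  rw [wUB, Walk.support_cons, wCB_support]

lemma wUV_support (u v : V) :
    (wUV (G := G) (n := n) u v).support = [Sum.inl u, vC V n 0 (by omega), Sum.inl v] := rfl

/-! ### pattern count lemmas -/

lemma patF_count {α : Type*} [DecidableEq α] (a0 b1 x : α) (hx : x ≠ a0) (m j : ℕ) :
    (((List.range m).map (fun t => if (fun _ => (false : Bool)) (j + t) then b1 else a0)).count x)
      = 0 := by
  rw [List.count_eq_zero]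
  intro hmem
  simp only [List.mem_map] at hmem
  obtain ⟨t, -, ht⟩ := hmem
  simp only [Bool.false_eq_true, if_false] at ht
  exact hx ht.symm

lemma patT_count {α : Type*} [DecidableEq α] (a0 b1 : α) (hab : a0 ≠ b1) (m j t0 : ℕ)
    (h1 : j ≤ t0) (h2 : t0 < j + m) :
    (((List.range m).map (fun t => if (fun i => i == t0) (j + t) then b1 else a0)).count b1)
      = 1 := by
  have he : ∀ t ∈ List.range m,
      (if ((j + t) == t0 : Bool) then b1 else a0) = (if j + t = t0 then b1 else a0) := by
    intro t _
    by_cases h : j + t = t0 <;> simp [h]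
  rw [List.map_congr_left he]
  exact count_one_pattern b1 a0 hab m j t0 h1 h2

lemma patN_count {α : Type*} [DecidableEq α] (a0 b1 : α) (hab : a0 ≠ b1) (m j t0 : ℕ)
    (h1 : j ≤ t0) (h2 : t0 < j + m) :
    (((List.range m).map (fun t => if (fun i => !(i == t0)) (j + t) then b1 else a0)).count a0)
      = 1 := by
  have he : ∀ t ∈ List.range m,
      (if (!((j + t) == t0) : Bool) then b1 else a0) = (if j + t = t0 then a0 else b1) := by
    intro t _
    by_cases h : j + t = t0 <;> simp [h]
  rw [List.map_congr_left he]
  exact count_one_pattern a0 b1 (Ne.symm hab) m j t0 h1 h2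

/-! ### the coloring setup -/

structure Setup (G : SimpleGraph V) (n : ℕ) {α : Type*} (f : V ⊕ QV n → α)
    (a0 b1 c2 st : α) : Prop where
  hfA : ∀ i hi, f (vA V n i hi) = a0
  hfB : ∀ i hi, f (vB V n i hi) = b1
  hfC : ∀ j hj, 1 ≤ j → f (vC V n j hj) = c2
  hfC0 : ∀ h0, f (vC V n 0 h0) = st
  hab : a0 ≠ b1
  hac : a0 ≠ c2
  hbc : b1 ≠ c2
  hsa : a0 ≠ st
  hsb : b1 ≠ st
  hsc : c2 ≠ st
  hfu : ∀ u : V, f (Sum.inl u) ≠ st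

def Good (G : SimpleGraph V) (n : ℕ) {α : Type*} [DecidableEq α] (f : V ⊕ QV n → α)
    (x y : V ⊕ QV n) : Prop :=
  ∃ p : (joinQ G n).Walk x y, p.length = (joinQ G n).dist x y ∧
    ∃ c : α, ((p.support.map f).count c) = 1

lemma Good.symm {α : Type*} [DecidableEq α] {f : V ⊕ QV n → α} {x y : V ⊕ QV n}
    (h : Good G n f x y) : Good G n f y x := by
  obtain ⟨p, hl, c, hc⟩ := h
  refine ⟨p.reverse, ?_, c, ?_⟩
  · rw [Walk.length_reverse, hl, SimpleGraph.dist_comm]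
  · rw [Walk.support_reverse, List.map_reverse, List.count_reverse]
    exact hc

section GoodLemmas
variable {α : Type*} [DecidableEq α] {f : V ⊕ QV n → α} {a0 b1 c2 st : α}

lemma count_upW'_st (S : Setup G n f a0 b1 c2 st) (s : ℕ → Bool) (j j' : ℕ)
    (hjj : j ≤ j') (h : j' ≤ n) :
    (((upW' G n s j j' hjj h).support.map f).count st) = if j = 0 then 1 else 0 := by
  rw [upW'_support]
  exact upW_count_st f st (fun i hi => by rw [S.hfA]; exact S.hsa)
    (fun i hi => by rw [S.hfB]; exact S.hsb)
    (fun j hj h1 => by rw [S.hfC _ _ h1]; exact S.hsc) S.hfC0 s _ _ _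

lemma count_upW'_x (S : Setup G n f a0 b1 c2 st) (s : ℕ → Bool) (j j' : ℕ)
    (hjj : j ≤ j') (h : j' ≤ n) (hj1 : 1 ≤ j) (x : α) :
    (((upW' G n s j j' hjj h).support.map f).count x)
      = (if x = c2 then (j' - j) + 1 else 0)
        + (((List.range (j' - j)).map (fun t => if s (j+t) then b1 else a0)).count x) := by
  rw [upW'_support]
  exact upW_count f a0 b1 c2 S.hfA S.hfB S.hfC S.hac S.hbc s _ _ hj1 _ x
end GoodLemmas

section GoodLemmas2
variable {α : Type*} [DecidableEq α] {f : V ⊕ QV n → α} {a0 b1 c2 st : α}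

lemma good_CC (S : Setup G n f a0 b1 c2 st) (j j' : ℕ) (hlt : j < j') (hj' : j' ≤ n) :
    Good G n f (vC V n j (by omega)) (vC V n j' hj') := by
  have hd : (joinQ G n).dist (vC V n j (by omega)) (vC V n j' hj') = 2 * (j' - j) :=
    (dist_edist_of_walk _ (upW' G n (fun _ => false) j j' (by omega) hj') (by simp)
      (fun q => by
        have h1 := phi_walk q; have h2 := phi_walk' q
        simp only [phi_vC] at h1 h2; omega)).1
  rcases Nat.eq_zero_or_pos j with rfl | hj1
  · refine ⟨upW' G n (fun _ => false) 0 j' (by omega) hj', by simp [hd], st, ?_⟩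
    rw [count_upW'_st S]
    simp
  · refine ⟨upW' G n (fun i => i == j) j j' (by omega) hj', by simp [hd], b1, ?_⟩
    rw [count_upW'_x S _ _ _ _ _ hj1,
      patT_count a0 b1 S.hab (j' - j) j j le_rfl (by omega)]
    simp [S.hbc]

lemma good_CA (S : Setup G n f a0 b1 c2 st) (j i : ℕ) (hj : j ≤ i) (hi : i < n) :
    Good G n f (vC V n j (by omega)) (vA V n i hi) := by
  have hd : (joinQ G n).dist (vC V n j (by omega)) (vA V n i hi) = 2 * (i - j) + 1 :=
    (dist_edist_of_walk _ (wCA (G := G) (fun _ => false) j i hj hi) (by simp)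
      (fun q => by
        have h1 := phi_walk q; have h2 := phi_walk' q
        simp only [phi_vC, phi_vA] at h1 h2; omega)).1
  rcases Nat.eq_zero_or_pos j with rfl | hj1
  · refine ⟨wCA (G := G) (fun _ => false) 0 i hj hi, by simp [hd], st, ?_⟩
    rw [wCA_support, List.map_append, List.count_append, count_upW'_st S]
    simp [S.hfA, S.hsa, List.count_cons]
  · rcases eq_or_lt_of_le hj with rfl | hlt
    · refine ⟨wCA (G := G) (fun _ => false) j j le_rfl hi, by simp [hd], a0, ?_⟩
      rw [wCA_support, List.map_append, List.count_append, count_upW'_x S _ _ _ _ _ hj1]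
      simp [S.hfA, S.hac]
    · refine ⟨wCA (G := G) (fun i' => i' == j) j i hj hi, by simp [hd], b1, ?_⟩
      rw [wCA_support, List.map_append, List.count_append, count_upW'_x S _ _ _ _ _ hj1,
        patT_count a0 b1 S.hab (i - j) j j le_rfl (by omega)]
      simp [S.hfA, S.hbc, Ne.symm S.hab, List.count_cons, S.hab]

lemma good_AC (S : Setup G n f a0 b1 c2 st) (i j : ℕ) (hi : i < n) (hij : i + 1 ≤ j)
    (hj : j ≤ n) : Good G n f (vA V n i hi) (vC V n j hj) := by
  have hd : (joinQ G n).dist (vA V n i hi) (vC V n j hj) = 2 * (j - i) - 1 :=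
    (dist_edist_of_walk _ (wAC (G := G) (fun _ => false) i j hi hij hj) (by simp)
      (fun q => by
        have h1 := phi_walk q; have h2 := phi_walk' q
        simp only [phi_vC, phi_vA] at h1 h2; omega)).1
  rcases eq_or_lt_of_le hij with rfl | hlt
  · refine ⟨wAC (G := G) (fun _ => false) i (i+1) hi le_rfl hj, by simp [hd], a0, ?_⟩
    rw [wAC_support, List.map_cons, List.count_cons, count_upW'_x S _ _ _ _ _ (by omega)]
    simp [S.hfA, S.hac]
  · refine ⟨wAC (G := G) (fun i' => i' == (i+1)) i j hi hij hj, by simp [hd], b1, ?_⟩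
    rw [wAC_support, List.map_cons, List.count_cons, count_upW'_x S _ _ _ _ _ (by omega),
      patT_count a0 b1 S.hab (j - (i+1)) (i+1) (i+1) le_rfl (by omega)]
    simp [S.hfA, S.hbc, S.hab, List.count_cons]

end GoodLemmas2

section GoodLemmas3
variable {α : Type*} [DecidableEq α] {f : V ⊕ QV n → α} {a0 b1 c2 st : α}

lemma good_CB (S : Setup G n f a0 b1 c2 st) (j i : ℕ) (hj : j ≤ i) (hi : i < n) :
    Good G n f (vC V n j (by omega)) (vB V n i hi) := by
  have hd : (joinQ G n).dist (vC V n j (by omega)) (vB V n i hi) = 2 * (i - j) + 1 :=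
    (dist_edist_of_walk _ (wCB (G := G) (fun _ => false) j i hj hi) (by simp)
      (fun q => by
        have h1 := phi_walk q; have h2 := phi_walk' q
        simp only [phi_vC, phi_vB] at h1 h2; omega)).1
  rcases Nat.eq_zero_or_pos j with rfl | hj1
  · refine ⟨wCB (G := G) (fun _ => false) 0 i hj hi, by simp [hd], st, ?_⟩
    rw [wCB_support, List.map_append, List.count_append, count_upW'_st S]
    simp [S.hfB, S.hsb, List.count_cons]
  · refine ⟨wCB (G := G) (fun _ => false) j i hj hi, by simp [hd], b1, ?_⟩
    rw [wCB_support, List.map_append, List.count_append, count_upW'_x S _ _ _ _ _ hj1,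
      patF_count a0 b1 b1 (Ne.symm S.hab) (i - j) j]
    simp [S.hfB, S.hbc, List.count_cons]

lemma good_BC (S : Setup G n f a0 b1 c2 st) (i j : ℕ) (hi : i < n) (hij : i + 1 ≤ j)
    (hj : j ≤ n) : Good G n f (vB V n i hi) (vC V n j hj) := by
  have hd : (joinQ G n).dist (vB V n i hi) (vC V n j hj) = 2 * (j - i) - 1 :=
    (dist_edist_of_walk _ (wBC (G := G) (fun _ => false) i j hi hij hj) (by simp)
      (fun q => by
        have h1 := phi_walk q; have h2 := phi_walk' q
        simp only [phi_vC, phi_vB] at h1 h2; omega)).1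
  refine ⟨wBC (G := G) (fun _ => false) i j hi hij hj, by simp [hd], b1, ?_⟩
  rw [wBC_support, List.map_cons, List.count_cons, count_upW'_x S _ _ _ _ _ (by omega),
    patF_count a0 b1 b1 (Ne.symm S.hab) (j - (i+1)) (i+1)]
  simp [S.hfB, S.hbc]

lemma good_AA (S : Setup G n f a0 b1 c2 st) (i i' : ℕ) (hi : i < n) (hii : i < i')
    (hi' : i' < n) : Good G n f (vA V n i hi) (vA V n i' hi') := by
  have hd : (joinQ G n).dist (vA V n i hi) (vA V n i' hi') = 2 * (i' - i) :=
    (dist_edist_of_walk _ (wAA (G := G) (fun _ => false) i i' hi hii hi') (by simp)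
      (fun q => by
        have h1 := phi_walk q; have h2 := phi_walk' q
        simp only [phi_vA] at h1 h2; omega)).1
  rcases eq_or_lt_of_le (show i + 1 ≤ i' from hii) with h1 | hlt
  · refine ⟨wAA (G := G) (fun _ => false) i i' hi hii hi', by simp [hd], c2, ?_⟩
    rw [wAA_support, List.map_cons, List.count_cons, List.map_append, List.count_append,
      count_upW'_x S _ _ _ _ _ (by omega)]
    have : i' - (i + 1) = 0 := by omega
    rw [this]
    simp [S.hfA, S.hac, Ne.symm S.hac, List.count_cons]
  · refine ⟨wAA (G := G) (fun t => t == (i+1)) i i' hi hii hi', by simp [hd], b1, ?_⟩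
    rw [wAA_support, List.map_cons, List.count_cons, List.map_append, List.count_append,
      count_upW'_x S _ _ _ _ _ (by omega),
      patT_count a0 b1 S.hab (i' - (i+1)) (i+1) (i+1) le_rfl (by omega)]
    simp [S.hfA, S.hbc, S.hab, Ne.symm S.hab, List.count_cons]

lemma good_BB (S : Setup G n f a0 b1 c2 st) (i i' : ℕ) (hi : i < n) (hii : i < i')
    (hi' : i' < n) : Good G n f (vB V n i hi) (vB V n i' hi') := by
  have hd : (joinQ G n).dist (vB V n i hi) (vB V n i' hi') = 2 * (i' - i) :=
    (dist_edist_of_walk _ (wBB (G := G) (fun _ => false) i i' hi hii hi') (by simp)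
      (fun q => by
        have h1 := phi_walk q; have h2 := phi_walk' q
        simp only [phi_vB] at h1 h2; omega)).1
  rcases eq_or_lt_of_le (show i + 1 ≤ i' from hii) with h1 | hlt
  · refine ⟨wBB (G := G) (fun _ => false) i i' hi hii hi', by simp [hd], c2, ?_⟩
    rw [wBB_support, List.map_cons, List.count_cons, List.map_append, List.count_append,
      count_upW'_x S _ _ _ _ _ (by omega)]
    have : i' - (i + 1) = 0 := by omega
    rw [this]
    simp [S.hfB, S.hbc, Ne.symm S.hbc, List.count_cons]
  · refine ⟨wBB (G := G) (fun t => !(t == (i+1))) i i' hi hii hi', by simp [hd], a0, ?_⟩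
    rw [wBB_support, List.map_cons, List.count_cons, List.map_append, List.count_append,
      count_upW'_x S _ _ _ _ _ (by omega),
      patN_count a0 b1 S.hab (i' - (i+1)) (i+1) (i+1) le_rfl (by omega)]
    simp [S.hfB, S.hac, S.hab, Ne.symm S.hab, List.count_cons]

lemma good_AB (S : Setup G n f a0 b1 c2 st) (i i' : ℕ) (hi : i < n) (hii : i < i')
    (hi' : i' < n) : Good G n f (vA V n i hi) (vB V n i' hi') := by
  have hd : (joinQ G n).dist (vA V n i hi) (vB V n i' hi') = 2 * (i' - i) :=
    (dist_edist_of_walk _ (wAB (G := G) (fun _ => false) i i' hi hii hi') (by simp)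
      (fun q => by
        have h1 := phi_walk q; have h2 := phi_walk' q
        simp only [phi_vA, phi_vB] at h1 h2; omega)).1
  refine ⟨wAB (G := G) (fun _ => false) i i' hi hii hi', by simp [hd], b1, ?_⟩
  rw [wAB_support, List.map_cons, List.count_cons, List.map_append, List.count_append,
    count_upW'_x S _ _ _ _ _ (by omega),
    patF_count a0 b1 b1 (Ne.symm S.hab) (i' - (i+1)) (i+1)]
  simp [S.hfA, S.hfB, S.hbc, S.hab, Ne.symm S.hab, List.count_cons]

lemma good_BA (S : Setup G n f a0 b1 c2 st) (i i' : ℕ) (hi : i < n) (hii : i < i')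
    (hi' : i' < n) : Good G n f (vB V n i hi) (vA V n i' hi') := by
  have hd : (joinQ G n).dist (vB V n i hi) (vA V n i' hi') = 2 * (i' - i) :=
    (dist_edist_of_walk _ (wBA (G := G) (fun _ => false) i i' hi hii hi') (by simp)
      (fun q => by
        have h1 := phi_walk q; have h2 := phi_walk' q
        simp only [phi_vA, phi_vB] at h1 h2; omega)).1
  refine ⟨wBA (G := G) (fun _ => false) i i' hi hii hi', by simp [hd], b1, ?_⟩
  rw [wBA_support, List.map_cons, List.count_cons, List.map_append, List.count_append,
    count_upW'_x S _ _ _ _ _ (by omega),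
    patF_count a0 b1 b1 (Ne.symm S.hab) (i' - (i+1)) (i+1)]
  simp [S.hfA, S.hfB, S.hbc, S.hab, Ne.symm S.hab, List.count_cons]

lemma good_AB_same (S : Setup G n f a0 b1 c2 st) (i : ℕ) (hi : i < n) :
    Good G n f (vA V n i hi) (vB V n i hi) := by
  refine ⟨Walk.cons (adj_AB hi) Walk.nil, ?_, a0, ?_⟩
  · rw [SimpleGraph.dist_eq_one_iff_adj.mpr (adj_AB hi)]; rfl
  · simp [S.hfA, S.hfB, List.count_cons, Ne.symm S.hab]

lemma good_UC (S : Setup G n f a0 b1 c2 st) (u : V) (j : ℕ) (hj : j ≤ n) :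
    Good G n f (Sum.inl u) (vC V n j hj) := by
  have hd : (joinQ G n).dist (Sum.inl u) (vC V n j hj) = 2 * j + 1 :=
    (dist_edist_of_walk _ (wUC (G := G) (fun _ => false) u j hj) (by simp)
      (fun q => by
        have h1 := phi_walk q; have h2 := phi_walk' q
        simp only [phi_vC, phi_inl] at h1 h2; omega)).1
  refine ⟨wUC (G := G) (fun _ => false) u j hj, by simp [hd], st, ?_⟩
  rw [wUC_support, List.map_cons, List.count_cons, count_upW'_st S]
  simp [S.hfu u]

lemma good_UA (S : Setup G n f a0 b1 c2 st) (u : V) (i : ℕ) (hi : i < n) :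
    Good G n f (Sum.inl u) (vA V n i hi) := by
  have hd : (joinQ G n).dist (Sum.inl u) (vA V n i hi) = 2 * i + 2 :=
    (dist_edist_of_walk _ (wUA (G := G) (fun _ => false) u i hi) (by simp)
      (fun q => by
        have h1 := phi_walk q; have h2 := phi_walk' q
        simp only [phi_vA, phi_inl] at h1 h2; omega)).1
  refine ⟨wUA (G := G) (fun _ => false) u i hi, by simp [hd], st, ?_⟩
  rw [wUA_support, List.map_cons, List.count_cons, List.map_append, List.count_append,
    count_upW'_st S]
  simp [S.hfu u, S.hfA, S.hsa, List.count_cons]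

lemma good_UB (S : Setup G n f a0 b1 c2 st) (u : V) (i : ℕ) (hi : i < n) :
    Good G n f (Sum.inl u) (vB V n i hi) := by
  have hd : (joinQ G n).dist (Sum.inl u) (vB V n i hi) = 2 * i + 2 :=
    (dist_edist_of_walk _ (wUB (G := G) (fun _ => false) u i hi) (by simp)
      (fun q => by
        have h1 := phi_walk q; have h2 := phi_walk' q
        simp only [phi_vB, phi_inl] at h1 h2; omega)).1
  refine ⟨wUB (G := G) (fun _ => false) u i hi, by simp [hd], st, ?_⟩
  rw [wUB_support, List.map_cons, List.count_cons, List.map_append, List.count_append,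
    count_upW'_st S]
  simp [S.hfu u, S.hfB, S.hsb, List.count_cons]

lemma good_UV_adj (S : Setup G n f a0 b1 c2 st) (u v : V) (hadj : G.Adj u v)
    (hne : f (Sum.inl u) ≠ f (Sum.inl v)) : Good G n f (Sum.inl u) (Sum.inl v) := by
  refine ⟨Walk.cons (adj_inl_inl hadj) Walk.nil, ?_, f (Sum.inl u), ?_⟩
  · rw [SimpleGraph.dist_eq_one_iff_adj.mpr (adj_inl_inl hadj)]; rfl
  · simp [List.count_cons, Ne.symm hne]

lemma good_UV_nadj (S : Setup G n f a0 b1 c2 st) (u v : V) (hne : u ≠ v)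
    (hnadj : ¬ G.Adj u v) : Good G n f (Sum.inl u) (Sum.inl v) := by
  have hd : (joinQ G n).dist (Sum.inl u) (Sum.inl v) = 2 :=
    (dist_edist_of_walk _ (wUV (G := G) (n := n) u v) (by simp)
      (fun q => two_le_len (by simp [hne]) (fun h => hnadj (adj_inl_inv h)) q)).1
  refine ⟨wUV (G := G) (n := n) u v, by simp [hd], st, ?_⟩
  rw [wUV_support]
  simp [List.count_cons, S.hfC0, S.hfu u, S.hfu v]

end GoodLemmas3

lemma vA_eq {i i' : ℕ} (hi : i < n) (hi' : i' < n) (e : i = i') :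
    vA V n i hi = vA V n i' hi' := by subst e; rfl

lemma vB_eq {i i' : ℕ} (hi : i < n) (hi' : i' < n) (e : i = i') :
    vB V n i hi = vB V n i' hi' := by subst e; rfl

lemma good_all {α : Type*} [DecidableEq α] {f : V ⊕ QV n → α} {a0 b1 c2 st : α}
    (S : Setup G n f a0 b1 c2 st)
    (hprop : ∀ u v : V, G.Adj u v → f (Sum.inl u) ≠ f (Sum.inl v)) :
    ∀ x y : V ⊕ QV n, x ≠ y → Good G n f x y := by
  intro x y hxy
  rcases vert_cases x with ⟨u, rfl⟩ | ⟨j, hj, rfl⟩ | ⟨i, hi, rfl⟩ | ⟨i, hi, rfl⟩ <;>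
    rcases vert_cases y with ⟨v, rfl⟩ | ⟨j', hj', rfl⟩ | ⟨i', hi', rfl⟩ | ⟨i', hi', rfl⟩
  · have huv : u ≠ v := fun e => hxy (by rw [e])
    by_cases hadj : G.Adj u v
    · exact good_UV_adj S u v hadj (hprop u v hadj)
    · exact good_UV_nadj S u v huv hadj
  · exact good_UC S u j' hj'
  · exact good_UA S u i' hi'
  · exact good_UB S u i' hi'
  · exact (good_UC S v j hj).symm
  · have hne : j ≠ j' := fun e => hxy (vC_eq _ _ e)
    rcases lt_or_gt_of_ne hne with h | h
    · exact good_CC S j j' h hj'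
    · exact (good_CC S j' j h hj).symm
  · rcases le_or_gt j i' with h | h
    · exact good_CA S j i' h hi'
    · exact (good_AC S i' j hi' h hj).symm
  · rcases le_or_gt j i' with h | h
    · exact good_CB S j i' h hi'
    · exact (good_BC S i' j hi' h hj).symm
  · exact (good_UA S v i hi).symm
  · rcases le_or_gt (i+1) j' with h | h
    · exact good_AC S i j' hi h hj'
    · exact (good_CA S j' i (by omega) hi).symm
  · have hne : i ≠ i' := fun e => hxy (vA_eq _ _ e)
    rcases lt_or_gt_of_ne hne with h | h
    · exact good_AA S i i' hi h hi'
    · exact (good_AA S i' i hi' h hi).symm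
  · rcases lt_trichotomy i i' with h | rfl | h
    · exact good_AB S i i' hi h hi'
    · exact good_AB_same S i hi
    · exact (good_BA S i' i hi' h hi).symm
  · exact (good_UB S v i hi).symm
  · rcases le_or_gt (i+1) j' with h | h
    · exact good_BC S i j' hi h hj'
    · exact (good_CB S j' i (by omega) hi).symm
  · rcases lt_trichotomy i i' with h | rfl | h
    · exact good_BA S i i' hi h hi'
    · exact (good_AB_same S i hi).symm
    · exact (good_AB S i' i hi' h hi).symm
  · have hne : i ≠ i' := fun e => hxy (vB_eq _ _ e)
    rcases lt_or_gt_of_ne hne with h | h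
    · exact good_BB S i i' hi h hi'
    · exact (good_BB S i' i hi' h hi).symm

lemma support_of_length_one {x y : V ⊕ QV n} (p : (joinQ G n).Walk x y) (hp : p.length = 1) :
    p.support = [x, y] := by
  cases p with
  | nil => simp at hp
  | cons h q =>
    cases q with
    | nil => rfl
    | cons h' q' => simp [Walk.length_cons] at hp

end Aux

/-- For odd `d ≥ 3` and `k ≥ 4`, with `n = (d-1)/2`: the graph `G'` obtained from a
nonempty connected graph `G` and `Q n` by joining `c_0` to all of `G` has diameter
exactly `d`, and `G` is `(k-1)`-colorable iff `G'` is strongly conflict-free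
vertex-connection `k`-colorable. -/
theorem stmt8 {V : Type*} [Fintype V] [Nonempty V] (G : SimpleGraph V) (hG : G.Connected)
    (d k : ℕ) (hd : 3 ≤ d) (hodd : Odd d) (hk : 4 ≤ k) :
    (joinQ G ((d - 1) / 2)).diam = d ∧
    (G.Colorable (k - 1) ↔
      ∃ f : V ⊕ QV ((d - 1) / 2) → Fin k, IsSCFVC (joinQ G ((d - 1) / 2)) f) := by
  classical
  obtain ⟨m, hm⟩ := hodd
  set n := (d - 1) / 2 with hn_def
  have hdn : d = 2 * n + 1 := by omega
  have hn : 1 ≤ n := by omega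
  constructor
  · rw [Aux.diam_joinQ hn]
    omega
  constructor
  · rintro ⟨gc⟩
    refine ⟨fun x => match x with
      | Sum.inl u => ⟨(gc u).val, by have := (gc u).isLt; omega⟩
      | Sum.inr (QV.A _) => ⟨0, by omega⟩
      | Sum.inr (QV.B _) => ⟨1, by omega⟩
      | Sum.inr (QV.C j) => if j.val = 0 then ⟨k - 1, by omega⟩ else ⟨2, by omega⟩, ?_⟩
    set f : V ⊕ QV n → Fin k := fun x => match x with
      | Sum.inl u => ⟨(gc u).val, by have := (gc u).isLt; omega⟩
      | Sum.inr (QV.A _) => ⟨0, by omega⟩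
      | Sum.inr (QV.B _) => ⟨1, by omega⟩
      | Sum.inr (QV.C j) => if j.val = 0 then ⟨k - 1, by omega⟩ else ⟨2, by omega⟩
      with hf_def
    have S : Aux.Setup G n f ⟨0, by omega⟩ ⟨1, by omega⟩ ⟨2, by omega⟩ ⟨k - 1, by omega⟩ :=
      { hfA := fun i hi => rfl
        hfB := fun i hi => rfl
        hfC := fun j hj h1 => by
          show (if j = 0 then _ else _) = _
          rw [if_neg (by omega)]
        hfC0 := fun h0 => rfl
        hab := by simp [Fin.ext_iff]
        hac := by simp [Fin.ext_iff]
        hbc := by simp [Fin.ext_iff]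
        hsa := by simp [Fin.ext_iff]; omega
        hsb := by simp [Fin.ext_iff]; omega
        hsc := by simp [Fin.ext_iff]; omega
        hfu := fun u => by
          have := (gc u).isLt
          show (⟨(gc u).val, by omega⟩ : Fin k) ≠ ⟨k - 1, by omega⟩
          simp [Fin.ext_iff]
          omega }
    have hprop : ∀ u v : V, G.Adj u v → f (Sum.inl u) ≠ f (Sum.inl v) := by
      intro u v hadj e
      have hval : (gc u).val = (gc v).val := by
        have : ((⟨(gc u).val, by have := (gc u).isLt; omega⟩ : Fin k)) =
            ⟨(gc v).val, by have := (gc v).isLt; omega⟩ := e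
        simpa [Fin.ext_iff] using this
      exact gc.valid hadj (Fin.val_injective hval)
    intro x y hxy
    exact Aux.good_all S hprop x y hxy
  · rintro ⟨f, hf⟩
    have hprop : ∀ x y : V ⊕ QV n, (joinQ G n).Adj x y → f x ≠ f y := by
      intro x y hadj heq
      obtain ⟨p, hlen, c, hc⟩ := hf x y hadj.ne
      rw [SimpleGraph.dist_eq_one_iff_adj.mpr hadj] at hlen
      rw [Aux.support_of_length_one p hlen] at hc
      by_cases h : f y = c <;>
        simp [List.count_cons, heq, h] at hc
    have hV : ∀ u : V, f (Sum.inl u) ≠ f (Sum.inr (QV.C ⟨0, by omega⟩)) :=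
      fun u => hprop _ _ (Aux.adj_inl_C0 u (by omega))
    have hVV : ∀ u v : V, G.Adj u v → f (Sum.inl u) ≠ f (Sum.inl v) :=
      fun u v h => hprop _ _ (Aux.adj_inl_inl h)
    set s0 : Fin k := f (Sum.inr (QV.C ⟨0, by omega⟩)) with hs0
    refine ⟨SimpleGraph.Coloring.mk (fun u =>
      if h : (f (Sum.inl u)).val < s0.val then
        ⟨(f (Sum.inl u)).val, by have := s0.isLt; omega⟩
      else ⟨(f (Sum.inl u)).val - 1, by have := (f (Sum.inl u)).isLt; omega⟩) ?_⟩
    intro u v hadj heq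
    have h1 : (f (Sum.inl u)).val ≠ (f (Sum.inl v)).val :=
      fun e => hVV u v hadj (Fin.val_injective e)
    have h2 : (f (Sum.inl u)).val ≠ s0.val := fun e => hV u (Fin.val_injective e)
    have h3 : (f (Sum.inl v)).val ≠ s0.val := fun e => hV v (Fin.val_injective e)
    have hu := (f (Sum.inl u)).isLt
    have hv := (f (Sum.inl v)).isLt
    split_ifs at heq <;> simp [Fin.ext_iff] at heq <;> omega
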